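/- arXiv:2007.07989 — 3 statements merged into one kernel-verified Lean document; each statement's English description precedes it below -/
import Mathlib

section
/- Suppose the multistage momentum weights satisfy 1/2 ≤ β_1 ≤ β_2 ≤ … ≤ β_n < 1 and β_i^{2 T_i} ≤ 1/2 for every stage i = 1, …, n. Then for every 1 ≤ k ≤ T_1 + … + T_n: (1/(1−β_1)) E[‖m^k − ∑_{i=1}^k b_{k,i} g^i‖²] ≤ 2σ². -/
open MeasureTheory ProbabilityTheory
open scoped RealInnerProductSpace ENNReal

namespace MultistageSGDMAux

variable {Z : Type*} [MeasurableSpace Z] {d : ℕ}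

/-- The SGDM recursion as a function of the noise sequence:
`seq G A B x1 k z = (m k, x (k+1))`. -/
noncomputable def seq (G : EuclideanSpace ℝ (Fin d) → Z → EuclideanSpace ℝ (Fin d))
    (A B : ℕ → ℝ) (x1 : EuclideanSpace ℝ (Fin d)) :
    ℕ → (ℕ → Z) → EuclideanSpace ℝ (Fin d) × EuclideanSpace ℝ (Fin d)
  | 0, _ => (0, x1)
  | (k+1), z =>
      let p := seq G A B x1 k z
      let mk := B (k+1) • p.1 + (1 - B (k+1)) • G p.2 (z (k+1))
      (mk, p.2 - A (k+1) • mk)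

lemma seq_measurable {G : EuclideanSpace ℝ (Fin d) → Z → EuclideanSpace ℝ (Fin d)}
    (hG : Measurable (Function.uncurry G)) (A B : ℕ → ℝ) (x1 : EuclideanSpace ℝ (Fin d))
    (k : ℕ) : Measurable (seq G A B x1 k) := by
  induction k with
  | zero => exact measurable_const
  | succ k ih =>
      have h2 : Measurable fun z : ℕ → Z => (seq G A B x1 k z).2 := measurable_snd.comp ih
      have h1 : Measurable fun z : ℕ → Z => (seq G A B x1 k z).1 := measurable_fst.comp ih
      have hg : Measurable fun z : ℕ → Z => G (seq G A B x1 k z).2 (z (k+1)) :=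
        hG.comp (h2.prodMk (measurable_pi_apply (k+1)))
      have hmk : Measurable fun z : ℕ → Z =>
          B (k+1) • (seq G A B x1 k z).1 + (1 - B (k+1)) • G (seq G A B x1 k z).2 (z (k+1)) :=
        (h1.const_smul (B (k+1))).add (hg.const_smul (1 - B (k+1)))
      exact Measurable.prod hmk (h2.sub (hmk.const_smul (A (k+1))))

omit [MeasurableSpace Z] in
lemma seq_congr {G : EuclideanSpace ℝ (Fin d) → Z → EuclideanSpace ℝ (Fin d)}
    (A B : ℕ → ℝ) (x1 : EuclideanSpace ℝ (Fin d)) (k : ℕ) {z z' : ℕ → Z}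
    (h : ∀ i, 1 ≤ i → i ≤ k → z i = z' i) : seq G A B x1 k z = seq G A B x1 k z' := by
  induction k with
  | zero => rfl
  | succ k ih =>
      have hk : seq G A B x1 k z = seq G A B x1 k z' :=
        ih fun i h1 h2 => h i h1 (h2.trans (Nat.le_succ k))
      simp only [seq, hk, h (k+1) (Nat.le_add_left 1 k) le_rfl]

lemma enorm_sq (a : EuclideanSpace ℝ (Fin d)) :
    (‖(‖a‖^2 : ℝ)‖₊ : ℝ≥0∞) = (‖a‖₊ : ℝ≥0∞)^2 := by
  rw [← enorm_eq_nnnorm, Real.enorm_eq_ofReal (sq_nonneg _), ENNReal.ofReal_pow (norm_nonneg _),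
    ofReal_norm, enorm_eq_nnnorm]

lemma memℒp_two_iff_lint {ν : Measure Z} {e : Z → EuclideanSpace ℝ (Fin d)}
    (he : AEStronglyMeasurable e ν) :
    MemLp e 2 ν ↔ (∫⁻ v, (‖e v‖₊ : ℝ≥0∞)^2 ∂ν) < ⊤ := by
  rw [memLp_two_iff_integrable_sq_norm he]
  constructor
  · intro h
    have := h.hasFiniteIntegral
    rw [HasFiniteIntegral] at this
    simpa only [enorm_eq_nnnorm, enorm_sq] using this
  · intro h
    refine ⟨(he.norm.pow 2), ?_⟩
    rw [HasFiniteIntegral]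
    simpa only [enorm_eq_nnnorm, enorm_sq] using h




lemma enorm_sq' (a : EuclideanSpace ℝ (Fin d)) :
    (‖a‖₊ : ℝ≥0∞)^2 = ENNReal.ofReal (‖a‖^2) := by
  rw [ENNReal.ofReal_pow (norm_nonneg _), ofReal_norm, enorm_eq_nnnorm]

lemma inner_moment (ν : Measure Z) [IsProbabilityMeasure ν]
    {e : Z → EuclideanSpace ℝ (Fin d)} (he : Measurable e)
    (c : EuclideanSpace ℝ (Fin d)) {β : ℝ} (hβ0 : 0 ≤ β) (hβ1 : β < 1)
    (hmean : MemLp e 2 ν → ∫ v, e v ∂ν = 0) :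
    (ENNReal.ofReal (β^2) * (‖c‖₊ : ℝ≥0∞)^2
        ≤ ∫⁻ v, (‖β • c + (1-β) • e v‖₊ : ℝ≥0∞)^2 ∂ν)
    ∧ (MemLp e 2 ν → ∫⁻ v, (‖β • c + (1-β) • e v‖₊ : ℝ≥0∞)^2 ∂ν
        = ENNReal.ofReal (β^2 * ‖c‖^2 + (1-β)^2 * ∫ v, ‖e v‖^2 ∂ν))
    ∧ (¬ MemLp e 2 ν → ∫⁻ v, (‖β • c + (1-β) • e v‖₊ : ℝ≥0∞)^2 ∂ν = ⊤) := by
  have hb : (1:ℝ) - β ≠ 0 := by linarith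
  set F : Z → EuclideanSpace ℝ (Fin d) := fun v => β • c + (1-β) • e v with hF
  have hFmeas : Measurable F := (measurable_const.add (he.const_smul (1-β)))
  have hiff : MemLp F 2 ν ↔ MemLp e 2 ν := by
    constructor
    · intro h
      have : e = fun v => (1-β)⁻¹ • (F v - β • c) := by
        funext v
        simp only [hF]
        rw [add_sub_cancel_left, smul_smul, inv_mul_cancel₀ hb, one_smul]
      rw [this]
      exact ((h.sub (memLp_const (β • c))).const_smul (1-β)⁻¹)
    · intro h
      have : F = (fun _ => β • c) + fun v => (1-β) • e v := rfl
      rw [this]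
      exact (memLp_const (β • c)).add (h.const_smul (1-β))
  by_cases hL : MemLp e 2 ν
  · have hFL : MemLp F 2 ν := hiff.mpr hL
    have hInt : Integrable (fun v => ‖F v‖^2) ν :=
      (memLp_two_iff_integrable_sq_norm hFmeas.aestronglyMeasurable).mp hFL
    have heInt2 : Integrable (fun v => ‖e v‖^2) ν :=
      (memLp_two_iff_integrable_sq_norm he.aestronglyMeasurable).mp hL
    have heInt : Integrable e ν := hL.integrable one_le_two
    have expand : (fun v => ‖F v‖^2)
        = fun v => (β^2*‖c‖^2 + (2*β*(1-β)) * ⟪c, e v⟫) + (1-β)^2*‖e v‖^2 := by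
      funext v
      simp only [hF]
      rw [norm_add_sq_real, norm_smul, norm_smul, real_inner_smul_left, real_inner_smul_right]
      rw [Real.norm_eq_abs, Real.norm_eq_abs, mul_pow, mul_pow, sq_abs, sq_abs]
      ring
    have hiInt : Integrable (fun v => ⟪c, e v⟫) ν := heInt.const_inner c
    have hEq : ∫ v, ‖F v‖^2 ∂ν = β^2*‖c‖^2 + (1-β)^2 * ∫ v, ‖e v‖^2 ∂ν := by
      rw [expand]
      rw [integral_add (f := fun v => β^2*‖c‖^2 + 2*β*(1-β) * ⟪c, e v⟫)
        (g := fun v => (1-β)^2*‖e v‖^2)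
        ((integrable_const _).add (hiInt.const_mul _)) (heInt2.const_mul _)]
      rw [integral_add (f := fun _ => β^2*‖c‖^2) (g := fun v => 2*β*(1-β) * ⟪c, e v⟫)
        (integrable_const _) (hiInt.const_mul _)]
      rw [integral_const_mul, integral_const_mul, integral_inner heInt, hmean hL,
        inner_zero_right, integral_const, integral_const_mul]
      simp
    have hlEq : ∫⁻ v, (‖F v‖₊ : ℝ≥0∞)^2 ∂ν = ENNReal.ofReal (∫ v, ‖F v‖^2 ∂ν) := by
      rw [ofReal_integral_eq_lintegral_ofReal hInt (ae_of_all _ fun v => sq_nonneg _)]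
      simp only [enorm_sq']
    refine ⟨?_, fun _ => by rw [hlEq, hEq], fun h => absurd hL h⟩
    rw [hlEq, hEq]
    have h1 : (0:ℝ) ≤ (1-β)^2 * ∫ v, ‖e v‖^2 ∂ν :=
      mul_nonneg (sq_nonneg _) (integral_nonneg fun v => sq_nonneg _)
    calc ENNReal.ofReal (β^2) * (‖c‖₊ : ℝ≥0∞)^2 = ENNReal.ofReal (β^2 * ‖c‖^2) := by
          rw [enorm_sq', ← ENNReal.ofReal_mul (sq_nonneg _)]
      _ ≤ _ := ENNReal.ofReal_le_ofReal (by linarith)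
  · have hFL : ¬ MemLp F 2 ν := fun h => hL (hiff.mp h)
    have htop : ∫⁻ v, (‖F v‖₊ : ℝ≥0∞)^2 ∂ν = ⊤ := by
      by_contra h
      exact hFL ((memℒp_two_iff_lint hFmeas.aestronglyMeasurable).mpr (lt_top_iff_ne_top.mpr h))
    exact ⟨htop ▸ le_top, fun h => absurd h hL, fun _ => htop⟩




end MultistageSGDMAux

set_option maxHeartbeats 1600000 in
/-- Variance bound for the multistage SGDM momentum vector. -/
theorem multistage_sgdm_momentum_variance
    {d : ℕ} (hd : 1 ≤ d)
    {Ω : Type*} [MeasureSpace Ω] (hprob : IsProbabilityMeasure (ℙ : Measure Ω))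
    {Z : Type*} [mZ : MeasurableSpace Z]
    (f : EuclideanSpace ℝ (Fin d) → ℝ)
    (gradf : EuclideanSpace ℝ (Fin d) → EuclideanSpace ℝ (Fin d))
    (hgrad : ∀ x, HasGradientAt f (gradf x) x)
    (L : ℝ) (hL : 0 < L)
    (hsmooth : ∀ x y, ‖gradf x - gradf y‖ ≤ L * ‖x - y‖)
    (fstar : ℝ) (hfstar : IsGLB (Set.range f) fstar)
    (σ : ℝ) (hσ : 0 ≤ σ)
    (ζ : ℕ → Ω → Z) (hζmeas : ∀ k, Measurable (ζ k))
    (hindep : iIndepFun ζ ℙ)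
    (G : EuclideanSpace ℝ (Fin d) → Z → EuclideanSpace ℝ (Fin d))
    (hGmeas : Measurable (Function.uncurry G))
    (hunbiased : ∀ x k, ∫ ω, G x (ζ k ω) ∂ℙ = gradf x)
    (hvar : ∀ x k, ∫ ω, ‖G x (ζ k ω) - gradf x‖ ^ 2 ∂ℙ ≤ σ ^ 2)
    (n : ℕ) (hn : 1 ≤ n)
    (αs βs : ℕ → ℝ) (T : ℕ → ℕ)
    (hαs : ∀ l ∈ Finset.Icc 1 n, 0 < αs l)
    (hβs : ∀ l ∈ Finset.Icc 1 n, βs l ∈ Set.Ico (0 : ℝ) 1)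
    (A B : ℕ → ℝ)
    (hstage : ∀ l ∈ Finset.Icc 1 n, ∀ k : ℕ,
      (∑ j ∈ Finset.Icc 1 (l - 1), T j) < k → k ≤ (∑ j ∈ Finset.Icc 1 l, T j) →
      A k = αs l ∧ B k = βs l)
    (x m : ℕ → Ω → EuclideanSpace ℝ (Fin d))
    (x1 : EuclideanSpace ℝ (Fin d)) (hx1 : ∀ ω, x 1 ω = x1)
    (hm0 : ∀ ω, m 0 ω = 0)
    (hm : ∀ k, 1 ≤ k → ∀ ω, m k ω = B k • m (k - 1) ω + (1 - B k) • G (x k ω) (ζ k ω))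
    (hx : ∀ k, 1 ≤ k → ∀ ω, x (k + 1) ω = x k ω - A k • m k ω)
    (hmono : ∀ i j : ℕ, 1 ≤ i → i ≤ j → j ≤ n → βs i ≤ βs j)
    (hβhalf : (1 : ℝ) / 2 ≤ βs 1)
    (hThalf : ∀ i ∈ Finset.Icc 1 n, βs i ^ (2 * T i) ≤ (1 : ℝ) / 2) :
    ∀ k : ℕ, 1 ≤ k → k ≤ ∑ j ∈ Finset.Icc 1 n, T j →
      (1 / (1 - βs 1)) *
          ∫ ω, ‖m k ω - ∑ i ∈ Finset.Icc 1 k,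
            ((1 - B i) * ∏ j ∈ Finset.Icc (i + 1) k, B j) • gradf (x i ω)‖ ^ 2 ∂ℙ
        ≤ 2 * σ ^ 2 := by
  classical
  haveI := hprob
  open MultistageSGDMAux in
  -- basic facts
  have hb1 : βs 1 ∈ Set.Ico (0:ℝ) 1 := hβs 1 (Finset.mem_Icc.mpr ⟨le_rfl, hn⟩)
  have hgradmeas : Measurable gradf := by
    have : LipschitzWith (Real.toNNReal L) gradf := by
      refine LipschitzWith.of_dist_le_mul fun a b => ?_
      rw [dist_eq_norm, dist_eq_norm]
      exact le_trans (hsmooth a b) (by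
        have : L ≤ (Real.toNNReal L : ℝ) := Real.le_coe_toNNReal L
        have h0 : (0:ℝ) ≤ ‖a - b‖ := norm_nonneg _
        nlinarith)
    exact this.continuous.measurable
  haveI hΩne : Nonempty Ω := by
    by_contra h
    rw [not_nonempty_iff] at h
    have h1 : (ℙ : Measure Ω) Set.univ = 1 := measure_univ
    rw [Set.univ_eq_empty_iff.mpr h, measure_empty] at h1
    exact zero_ne_one h1
  haveI hZne : Nonempty Z := ⟨ζ 0 (Classical.arbitrary Ω)⟩
  -- the recursion as a function of the noise
  have hrep : ∀ k ω, MultistageSGDMAux.seq G A B x1 k (fun i => ζ i ω) = (m k ω, x (k+1) ω) := by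
    intro k
    induction k with
    | zero =>
        intro ω
        simp only [MultistageSGDMAux.seq, Prod.mk.injEq]
        exact ⟨(hm0 ω).symm, (hx1 ω).symm⟩
    | succ k ih =>
        intro ω
        have h1 := hm (k+1) (Nat.le_add_left 1 k) ω
        simp only [Nat.add_sub_cancel] at h1
        have h2 := hx (k+1) (Nat.le_add_left 1 k) ω
        simp only [MultistageSGDMAux.seq, ih ω]
        exact Prod.ext (by rw [h1]) (by rw [h2, h1])
  -- deviation processes
  set Dom : ℕ → Ω → EuclideanSpace ℝ (Fin d) := fun k ω =>
    m k ω - ∑ i ∈ Finset.Icc 1 k,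
      ((1 - B i) * ∏ j ∈ Finset.Icc (i + 1) k, B j) • gradf (x i ω) with hDom
  set Dz : ℕ → (ℕ → Z) → EuclideanSpace ℝ (Fin d) := fun k z =>
    (MultistageSGDMAux.seq G A B x1 k z).1 - ∑ i ∈ Finset.Icc 1 k,
      ((1 - B i) * ∏ j ∈ Finset.Icc (i + 1) k, B j) •
        gradf ((MultistageSGDMAux.seq G A B x1 (i-1) z).2) with hDz
  have hDzmeas : ∀ k, Measurable (Dz k) := by
    intro k
    apply Measurable.sub
    · exact measurable_fst.comp (MultistageSGDMAux.seq_measurable hGmeas A B x1 k)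
    · apply Finset.measurable_sum
      intro i _
      exact ((hgradmeas.comp (measurable_snd.comp
        (MultistageSGDMAux.seq_measurable hGmeas A B x1 (i-1)))).const_smul
          ((1 - B i) * ∏ j ∈ Finset.Icc (i + 1) k, B j))
  have hDzω : ∀ k ω, Dz k (fun i => ζ i ω) = Dom k ω := by
    intro k ω
    simp only [hDz, hDom, hrep k ω]
    congr 1
    apply Finset.sum_congr rfl
    intro i hi
    have h1 : 1 ≤ i := (Finset.mem_Icc.mp hi).1
    rw [hrep (i-1) ω]
    have hii : i - 1 + 1 = i := by omega
    rw [hii]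
  have hDzcongr : ∀ k (z z' : ℕ → Z), (∀ i, 1 ≤ i → i ≤ k → z i = z' i) →
      Dz k z = Dz k z' := by
    intro k z z' h
    simp only [hDz]
    rw [MultistageSGDMAux.seq_congr A B x1 k h]
    congr 1
    apply Finset.sum_congr rfl
    intro i hi
    obtain ⟨hi1, hi2⟩ := Finset.mem_Icc.mp hi
    rw [MultistageSGDMAux.seq_congr A B x1 (i-1) (fun j hj1 hj2 => h j hj1 (by omega))]
  -- the recursion for the deviation
  have hDrec : ∀ k ω, Dom (k+1) ω = B (k+1) • Dom k ω
      + (1 - B (k+1)) • (G (x (k+1) ω) (ζ (k+1) ω) - gradf (x (k+1) ω)) := by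
    intro k ω
    have h1 := hm (k+1) (Nat.le_add_left 1 k) ω
    simp only [Nat.add_sub_cancel] at h1
    have hsum : ∑ i ∈ Finset.Icc 1 (k+1),
        ((1 - B i) * ∏ j ∈ Finset.Icc (i + 1) (k+1), B j) • gradf (x i ω)
        = B (k+1) • (∑ i ∈ Finset.Icc 1 k,
            ((1 - B i) * ∏ j ∈ Finset.Icc (i + 1) k, B j) • gradf (x i ω))
          + (1 - B (k+1)) • gradf (x (k+1) ω) := by
      rw [Finset.sum_Icc_succ_top (by omega : 1 ≤ k + 1)]
      congr 1
      · rw [Finset.smul_sum]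
        apply Finset.sum_congr rfl
        intro i hi
        obtain ⟨hi1, hi2⟩ := Finset.mem_Icc.mp hi
        rw [smul_smul]
        congr 1
        rw [Finset.prod_Icc_succ_top (by omega : i + 1 ≤ k + 1)]
        ring
      · congr 1
        rw [Finset.Icc_eq_empty (by omega : ¬ (k+1+1 ≤ k+1)), Finset.prod_empty, mul_one]
    simp only [hDom]
    rw [h1, hsum, smul_sub, smul_sub]
    abel
  -- locating the stage of an iterate
  have stage_exists : ∀ k, 1 ≤ k → k ≤ ∑ j ∈ Finset.Icc 1 n, T j →
      ∃ l, l ∈ Finset.Icc 1 n ∧ (∑ j ∈ Finset.Icc 1 (l-1), T j) < k ∧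
        k ≤ ∑ j ∈ Finset.Icc 1 l, T j := by
    intro k hk1 hk2
    have hex : ∃ l, 1 ≤ l ∧ k ≤ ∑ j ∈ Finset.Icc 1 l, T j := ⟨n, hn, hk2⟩
    obtain ⟨hl1, hl2⟩ := Nat.find_spec hex
    have hln : Nat.find hex ≤ n := Nat.find_le ⟨hn, hk2⟩
    refine ⟨Nat.find hex, Finset.mem_Icc.mpr ⟨hl1, hln⟩, ?_, hl2⟩
    rcases Nat.eq_or_lt_of_le hl1 with h | h
    · have h0 : Nat.find hex - 1 = 0 := by omega
      rw [h0, Finset.Icc_eq_empty (by omega : ¬ (1:ℕ) ≤ 0), Finset.sum_empty]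
      omega
    · have hmin := Nat.find_min hex (m := Nat.find hex - 1) (by omega)
      push_neg at hmin
      have := hmin (by omega)
      omega
  -- facts about B on the relevant range
  have hBfacts : ∀ k, 1 ≤ k → k ≤ ∑ j ∈ Finset.Icc 1 n, T j →
      βs 1 ≤ B k ∧ B k < 1 ∧ 0 ≤ B k := by
    intro k hk1 hk2
    obtain ⟨l, hl, hlk1, hlk2⟩ := stage_exists k hk1 hk2
    obtain ⟨-, hB⟩ := hstage l hl k hlk1 hlk2
    obtain ⟨hl1, hln⟩ := Finset.mem_Icc.mp hl
    have hβmem := hβs l hl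
    exact ⟨hB ▸ hmono 1 l le_rfl hl1 hln, hB ▸ hβmem.2, hB ▸ hβmem.1⟩
  -- the main induction
  have key : ∀ k, k ≤ ∑ j ∈ Finset.Icc 1 n, T j →
      (∫⁻ ω, (‖Dom k ω‖₊ : ℝ≥0∞)^2 ∂ℙ) ≤ ENNReal.ofReal (σ^2 * (1 - βs 1)) ∨
      (∫⁻ ω, (‖Dom k ω‖₊ : ℝ≥0∞)^2 ∂ℙ) = ⊤ := by
    intro k
    induction k with
    | zero =>
        intro _
        left
        have h0 : ∀ ω, Dom 0 ω = 0 := by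
          intro ω
          simp [hDom, hm0, Finset.Icc_eq_empty (by omega : ¬ (1:ℕ) ≤ 0)]
        simp only [h0, nnnorm_zero, ENNReal.coe_zero]
        simp
    | succ k ih =>
        intro hk
        have IH := ih (le_trans (Nat.le_succ k) hk)
        obtain ⟨hβge, hβlt, hβ0⟩ := hBfacts (k+1) (Nat.le_add_left 1 k) hk
        have hβpos : (0:ℝ) < B (k+1) := lt_of_lt_of_le (by linarith [hb1.1, hb1.2, hβhalf]) hβge
        -- prefix random vector and extension
        set W : Ω → (↥(Finset.range (k+1)) → Z) := fun ω i => ζ i ω with hWdef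
        have hWmeas : Measurable W := measurable_pi_lambda _ fun i => hζmeas i
        set ext : (↥(Finset.range (k+1)) → Z) → (ℕ → Z) := fun w i =>
          if h : i ∈ Finset.range (k+1) then w ⟨i, h⟩ else Classical.arbitrary Z with hextdef
        have hextmeas : Measurable ext := by
          apply measurable_pi_lambda
          intro i
          by_cases h : i ∈ Finset.range (k+1)
          · simp only [hextdef, dif_pos h]
            exact measurable_pi_apply _
          · simp only [hextdef, dif_neg h]
            exact measurable_const
        have hextW : ∀ ω i, i ≤ k → ext (W ω) i = ζ i ω := by
          intro ω i hi
          have h : i ∈ Finset.range (k+1) := Finset.mem_range.mpr (by omega)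
          simp only [hextdef, hWdef, dif_pos h]
        -- the functions of the prefix
        set Df : (↥(Finset.range (k+1)) → Z) → EuclideanSpace ℝ (Fin d) :=
          fun w => Dz k (ext w) with hDfdef
        set Xf : (↥(Finset.range (k+1)) → Z) → EuclideanSpace ℝ (Fin d) :=
          fun w => (MultistageSGDMAux.seq G A B x1 k (ext w)).2 with hXfdef
        have hDfmeas : Measurable Df := (hDzmeas k).comp hextmeas
        have hXfmeas : Measurable Xf :=
          (measurable_snd.comp (MultistageSGDMAux.seq_measurable hGmeas A B x1 k)).comp hextmeas
        have hDfW : ∀ ω, Df (W ω) = Dom k ω := by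
          intro ω
          simp only [hDfdef]
          rw [hDzcongr k _ _ (fun i h1 h2 => hextW ω i h2), hDzω k ω]
        have hXfW : ∀ ω, Xf (W ω) = x (k+1) ω := by
          intro ω
          simp only [hXfdef]
          rw [MultistageSGDMAux.seq_congr A B x1 k (fun i h1 h2 => hextW ω i h2), hrep k ω]
        -- image measures
        set ν : Measure Z := Measure.map (ζ (k+1)) ℙ with hνdef
        set μW : Measure (↥(Finset.range (k+1)) → Z) := Measure.map W ℙ with hμWdef
        haveI hνprob : IsProbabilityMeasure ν := Measure.isProbabilityMeasure_map (hζmeas _).aemeasurable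
        haveI hμWprob : IsProbabilityMeasure μW := Measure.isProbabilityMeasure_map hWmeas.aemeasurable
        -- independence of the prefix and the fresh noise
        have hWind : IndepFun W (ζ (k+1)) ℙ := by
          have hdisj : Disjoint (Finset.range (k+1)) ({k+1} : Finset ℕ) :=
            Finset.disjoint_singleton_right.mpr Finset.notMem_range_self
          have h1 := hindep.indepFun_finset (Finset.range (k+1)) {k+1} hdisj hζmeas
          have h2 := h1.comp (φ := id) (ψ := fun g => g ⟨k+1, Finset.mem_singleton_self _⟩)
            measurable_id (measurable_pi_apply (X := fun _ : ↥({k+1} : Finset ℕ) => Z) _)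
          exact h2
        have hmapprod : Measure.map (fun ω => (W ω, ζ (k+1) ω)) ℙ = μW.prod ν :=
          (indepFun_iff_map_prod_eq_prod_map_map hWmeas.aemeasurable
            (hζmeas _).aemeasurable).mp hWind
        -- the update function
        set H : ((↥(Finset.range (k+1)) → Z) × Z) → EuclideanSpace ℝ (Fin d) := fun p =>
          B (k+1) • Df p.1 + (1 - B (k+1)) • (G (Xf p.1) p.2 - gradf (Xf p.1)) with hHdef
        have hHmeas : Measurable H := by
          apply Measurable.add
          · exact (hDfmeas.comp measurable_fst).const_smul (B (k+1))
          · exact (((hGmeas.comp ((hXfmeas.comp measurable_fst).prodMk measurable_snd)).sub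
              (hgradmeas.comp (hXfmeas.comp measurable_fst))).const_smul (1 - B (k+1)))
        have hHrep : ∀ ω, Dom (k+1) ω = H (W ω, ζ (k+1) ω) := by
          intro ω
          rw [hDrec k ω]
          simp only [hHdef, hDfW ω, hXfW ω]
        -- Fubini
        have hEexpr : (∫⁻ ω, (‖Dom (k+1) ω‖₊ : ℝ≥0∞)^2 ∂ℙ)
            = ∫⁻ w, ∫⁻ v, (‖H (w, v)‖₊ : ℝ≥0∞)^2 ∂ν ∂μW := by
          calc (∫⁻ ω, (‖Dom (k+1) ω‖₊ : ℝ≥0∞)^2 ∂ℙ)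
              = ∫⁻ ω, (‖H (W ω, ζ (k+1) ω)‖₊ : ℝ≥0∞)^2 ∂ℙ :=
                lintegral_congr fun ω => by rw [hHrep ω]
            _ = ∫⁻ p, (‖H p‖₊ : ℝ≥0∞)^2 ∂(Measure.map (fun ω => (W ω, ζ (k+1) ω)) ℙ) :=
                (lintegral_map (hHmeas.enorm.pow_const 2)
                  (hWmeas.prodMk (hζmeas _))).symm
            _ = ∫⁻ p, (‖H p‖₊ : ℝ≥0∞)^2 ∂(μW.prod ν) := by rw [hmapprod]
            _ = ∫⁻ w, ∫⁻ v, (‖H (w, v)‖₊ : ℝ≥0∞)^2 ∂ν ∂μW :=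
                lintegral_prod _ ((hHmeas.enorm.pow_const 2).aemeasurable)
        have hEk : (∫⁻ w, (‖Df w‖₊ : ℝ≥0∞)^2 ∂μW) = ∫⁻ ω, (‖Dom k ω‖₊ : ℝ≥0∞)^2 ∂ℙ := by
          rw [hμWdef, lintegral_map (f := fun w => (‖Df w‖₊ : ℝ≥0∞)^2) (hDfmeas.enorm.pow_const 2) hWmeas]
          exact lintegral_congr fun ω => by rw [hDfW ω]
        -- measurability of the noise at a frozen prefix
        have hew : ∀ w, Measurable (fun v => G (Xf w) v - gradf (Xf w)) := by
          intro w
          exact (hGmeas.comp (measurable_const.prodMk measurable_id)).sub measurable_const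
        have hmean_w : ∀ w, MemLp (fun v => G (Xf w) v - gradf (Xf w)) 2 ν →
            ∫ v, (G (Xf w) v - gradf (Xf w)) ∂ν = 0 := by
          intro w hL
          have hint : Integrable (fun v => G (Xf w) v - gradf (Xf w)) ν :=
            hL.integrable one_le_two
          have hintG : Integrable (fun v => G (Xf w) v) ν := by
            have heq : (fun v => G (Xf w) v)
                = fun v => (G (Xf w) v - gradf (Xf w)) + gradf (Xf w) := by
              funext v; abel
            rw [heq]
            exact hint.add (integrable_const _)
          rw [integral_sub hintG (integrable_const _), integral_const]
          have hGν : ∫ v, G (Xf w) v ∂ν = gradf (Xf w) := by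
            have hGx : Measurable (fun v => G (Xf w) v) :=
              hGmeas.comp (measurable_const.prodMk measurable_id)
            rw [hνdef, integral_map (hζmeas _).aemeasurable hGx.aestronglyMeasurable]
            exact hunbiased (Xf w) (k+1)
          rw [hGν]
          simp
        have hvar_w : ∀ w, ∫ v, ‖G (Xf w) v - gradf (Xf w)‖^2 ∂ν ≤ σ^2 := by
          intro w
          have hn2 : Measurable (fun v => ‖G (Xf w) v - gradf (Xf w)‖^2) :=
            (hew w).norm.pow_const 2
          rw [hνdef, integral_map (hζmeas _).aemeasurable hn2.aestronglyMeasurable]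
          exact hvar (Xf w) (k+1)
        -- the one-step conditional moment computation
        have hinner : ∀ w,
            (ENNReal.ofReal ((B (k+1))^2) * (‖Df w‖₊ : ℝ≥0∞)^2
              ≤ ∫⁻ v, (‖H (w, v)‖₊ : ℝ≥0∞)^2 ∂ν)
            ∧ (MemLp (fun v => G (Xf w) v - gradf (Xf w)) 2 ν →
                ∫⁻ v, (‖H (w, v)‖₊ : ℝ≥0∞)^2 ∂ν
                  = ENNReal.ofReal ((B (k+1))^2 * ‖Df w‖^2
                      + (1 - B (k+1))^2 * ∫ v, ‖G (Xf w) v - gradf (Xf w)‖^2 ∂ν))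
            ∧ (¬ MemLp (fun v => G (Xf w) v - gradf (Xf w)) 2 ν →
                ∫⁻ v, (‖H (w, v)‖₊ : ℝ≥0∞)^2 ∂ν = ⊤) := by
          intro w
          exact MultistageSGDMAux.inner_moment ν (hew w) (Df w) hβ0 hβlt (hmean_w w)
        -- lower bound: the second moment cannot decrease too fast
        have hlower : ENNReal.ofReal ((B (k+1))^2) * (∫⁻ ω, (‖Dom k ω‖₊ : ℝ≥0∞)^2 ∂ℙ)
            ≤ ∫⁻ ω, (‖Dom (k+1) ω‖₊ : ℝ≥0∞)^2 ∂ℙ := by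
          rw [hEexpr, ← hEk, ← lintegral_const_mul _ (f := fun w => (‖Df w‖₊ : ℝ≥0∞)^2) (hDfmeas.enorm.pow_const 2)]
          exact lintegral_mono fun w => (hinner w).1
        rcases IH with IHle | IHtop
        · -- split on whether the frozen noise has finite second moment a.e.
          have hJmeas : Measurable (fun w =>
              ∫⁻ v, (‖G (Xf w) v - gradf (Xf w)‖₊ : ℝ≥0∞)^2 ∂ν) := by
            apply Measurable.lintegral_prod_right
              (f := fun w v => (‖G (Xf w) v - gradf (Xf w)‖₊ : ℝ≥0∞)^2)
            exact (((hGmeas.comp ((hXfmeas.comp measurable_fst).prodMk measurable_snd)).sub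
              (hgradmeas.comp (hXfmeas.comp measurable_fst))).enorm.pow_const 2)
          have hbadmeas : MeasurableSet {w |
              (∫⁻ v, (‖G (Xf w) v - gradf (Xf w)‖₊ : ℝ≥0∞)^2 ∂ν) = ⊤} :=
            hJmeas (measurableSet_singleton ⊤)
          by_cases hbad : μW {w |
              (∫⁻ v, (‖G (Xf w) v - gradf (Xf w)‖₊ : ℝ≥0∞)^2 ∂ν) = ⊤} = 0
          · left
            have haeL : ∀ᵐ w ∂μW, MemLp (fun v => G (Xf w) v - gradf (Xf w)) 2 ν := by
              have hae0 : ∀ᵐ w ∂μW,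
                  (∫⁻ v, (‖G (Xf w) v - gradf (Xf w)‖₊ : ℝ≥0∞)^2 ∂ν) ≠ ⊤ := by
                rw [ae_iff]
                simpa only [ne_eq, not_not] using hbad
              exact hae0.mono fun w hw =>
                (MultistageSGDMAux.memℒp_two_iff_lint (hew w).aestronglyMeasurable).mpr
                  (lt_top_iff_ne_top.mpr hw)
            have hbound : ∀ᵐ w ∂μW, (∫⁻ v, (‖H (w, v)‖₊ : ℝ≥0∞)^2 ∂ν)
                ≤ ENNReal.ofReal ((B (k+1))^2) * (‖Df w‖₊ : ℝ≥0∞)^2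
                  + ENNReal.ofReal ((1 - B (k+1))^2 * σ^2) := by
              refine haeL.mono fun w hw => ?_
              rw [(hinner w).2.1 hw]
              have hstep1 : (B (k+1))^2 * ‖Df w‖^2
                  + (1 - B (k+1))^2 * ∫ v, ‖G (Xf w) v - gradf (Xf w)‖^2 ∂ν
                  ≤ (B (k+1))^2 * ‖Df w‖^2 + (1 - B (k+1))^2 * σ^2 := by
                have := mul_le_mul_of_nonneg_left (hvar_w w) (sq_nonneg (1 - B (k+1)))
                linarith
              calc ENNReal.ofReal ((B (k+1))^2 * ‖Df w‖^2
                    + (1 - B (k+1))^2 * ∫ v, ‖G (Xf w) v - gradf (Xf w)‖^2 ∂ν)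
                  ≤ ENNReal.ofReal ((B (k+1))^2 * ‖Df w‖^2 + (1 - B (k+1))^2 * σ^2) :=
                    ENNReal.ofReal_le_ofReal hstep1
                _ = ENNReal.ofReal ((B (k+1))^2 * ‖Df w‖^2)
                    + ENNReal.ofReal ((1 - B (k+1))^2 * σ^2) :=
                    ENNReal.ofReal_add (mul_nonneg (sq_nonneg _) (sq_nonneg _))
                      (mul_nonneg (sq_nonneg _) (sq_nonneg _))
                _ = ENNReal.ofReal ((B (k+1))^2) * (‖Df w‖₊ : ℝ≥0∞)^2
                    + ENNReal.ofReal ((1 - B (k+1))^2 * σ^2) := by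
                    rw [ENNReal.ofReal_mul (sq_nonneg _), MultistageSGDMAux.enorm_sq']
            have hbr : (B (k+1))^2 * (1 - βs 1) + (1 - B (k+1))^2 ≤ 1 - βs 1 := by
              have e2 : (0:ℝ) ≤ 1 - B (k+1) := by linarith
              have e3 : (1 - B (k+1))^2 ≤ (1 - βs 1)*(1 - B (k+1)) := by nlinarith
              have e4 : (1 - βs 1)*(1 - B (k+1))
                  ≤ (1 - βs 1)*((1 - B (k+1))*(1 + B (k+1))) := by nlinarith [hb1.2]
              nlinarith [e3, e4]
            calc (∫⁻ ω, (‖Dom (k+1) ω‖₊ : ℝ≥0∞)^2 ∂ℙ)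
                = ∫⁻ w, ∫⁻ v, (‖H (w, v)‖₊ : ℝ≥0∞)^2 ∂ν ∂μW := hEexpr
              _ ≤ ∫⁻ w, (ENNReal.ofReal ((B (k+1))^2) * (‖Df w‖₊ : ℝ≥0∞)^2
                    + ENNReal.ofReal ((1 - B (k+1))^2 * σ^2)) ∂μW := lintegral_mono_ae hbound
              _ = ENNReal.ofReal ((B (k+1))^2) * (∫⁻ w, (‖Df w‖₊ : ℝ≥0∞)^2 ∂μW)
                    + ENNReal.ofReal ((1 - B (k+1))^2 * σ^2) := by
                  rw [lintegral_add_right _ measurable_const, lintegral_const, measure_univ,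
                    mul_one, lintegral_const_mul _ (f := fun w => (‖Df w‖₊ : ℝ≥0∞)^2) (hDfmeas.enorm.pow_const 2)]
              _ ≤ ENNReal.ofReal ((B (k+1))^2) * ENNReal.ofReal (σ^2 * (1 - βs 1))
                    + ENNReal.ofReal ((1 - B (k+1))^2 * σ^2) := by
                  gcongr
                  rw [hEk]
                  exact IHle
              _ = ENNReal.ofReal ((B (k+1))^2 * (σ^2 * (1 - βs 1))
                    + (1 - B (k+1))^2 * σ^2) := by
                  rw [← ENNReal.ofReal_mul (sq_nonneg _),
                    ← ENNReal.ofReal_add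
                      (mul_nonneg (sq_nonneg _) (mul_nonneg (sq_nonneg _) (by linarith [hb1.2])))
                      (mul_nonneg (sq_nonneg _) (sq_nonneg _))]
              _ ≤ ENNReal.ofReal (σ^2 * (1 - βs 1)) := by
                  apply ENNReal.ofReal_le_ofReal
                  nlinarith [mul_le_mul_of_nonneg_left hbr (sq_nonneg σ)]
          · right
            rw [hEexpr]
            refine top_le_iff.mp ?_
            calc (⊤:ℝ≥0∞) = ⊤ * μW {w |
                  (∫⁻ v, (‖G (Xf w) v - gradf (Xf w)‖₊ : ℝ≥0∞)^2 ∂ν) = ⊤} :=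
                  (ENNReal.top_mul hbad).symm
              _ = ∫⁻ _ in {w |
                  (∫⁻ v, (‖G (Xf w) v - gradf (Xf w)‖₊ : ℝ≥0∞)^2 ∂ν) = ⊤}, ⊤ ∂μW :=
                  (setLIntegral_const _ _).symm
              _ = ∫⁻ w in {w |
                  (∫⁻ v, (‖G (Xf w) v - gradf (Xf w)‖₊ : ℝ≥0∞)^2 ∂ν) = ⊤},
                    (∫⁻ v, (‖H (w, v)‖₊ : ℝ≥0∞)^2 ∂ν) ∂μW := by
                  refine setLIntegral_congr_fun hbadmeas (fun w hw => ?_)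
                  refine ((hinner w).2.2 fun hL => ?_).symm
                  have := (MultistageSGDMAux.memℒp_two_iff_lint
                    (hew w).aestronglyMeasurable).mp hL
                  rw [Set.mem_setOf_eq.mp hw] at this
                  exact lt_irrefl ⊤ this
              _ ≤ ∫⁻ w, (∫⁻ v, (‖H (w, v)‖₊ : ℝ≥0∞)^2 ∂ν) ∂μW :=
                  setLIntegral_le_lintegral _ _
        · right
          have h2 : ENNReal.ofReal ((B (k+1))^2) ≠ 0 :=
            (ENNReal.ofReal_pos.mpr (by positivity)).ne'
          rw [IHtop, ENNReal.mul_top h2] at hlower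
          exact top_le_iff.mp hlower
  -- conclusion from `key`
  intro k hk1 hk2
  show (1 / (1 - βs 1)) * ∫ ω, ‖Dom k ω‖ ^ 2 ∂ℙ ≤ 2 * σ ^ 2
  have hDommeas : Measurable (Dom k) := by
    have : Dom k = fun ω => Dz k (fun i => ζ i ω) := by
      funext ω; rw [hDzω]
    rw [this]
    exact (hDzmeas k).comp (measurable_pi_lambda _ fun i => hζmeas i)
  have hInt : ∫ ω, ‖Dom k ω‖ ^ 2 ∂ℙ = (∫⁻ ω, (‖Dom k ω‖₊ : ℝ≥0∞)^2 ∂ℙ).toReal := by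
    rw [integral_eq_lintegral_of_nonneg_ae (ae_of_all _ fun ω => sq_nonneg _)
      (hDommeas.norm.pow_const 2).aestronglyMeasurable]
    congr 1
    exact lintegral_congr fun ω => (MultistageSGDMAux.enorm_sq' _).symm
  have hβ1lt := hb1.2
  have hβ10 := hb1.1
  have hfrac : (0:ℝ) ≤ 1 / (1 - βs 1) := by
    have : (0:ℝ) < 1 - βs 1 := by linarith
    positivity
  rcases key k hk2 with hle | htop
  · have h1 : (∫⁻ ω, (‖Dom k ω‖₊ : ℝ≥0∞)^2 ∂ℙ).toReal ≤ σ^2 * (1 - βs 1) :=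
      ENNReal.toReal_le_of_le_ofReal (by nlinarith) hle
    rw [hInt]
    have h2 : (1 / (1 - βs 1)) * (σ^2 * (1 - βs 1)) = σ^2 := by
      field_simp
    nlinarith [mul_le_mul_of_nonneg_left h1 hfrac, sq_nonneg σ]
  · rw [hInt, htop, ENNReal.toReal_top, mul_zero]
    positivity
end

section
/- Suppose the multistage momentum weights satisfy 1/2 ≤ β_1 ≤ β_2 ≤ … ≤ β_n < 1, β_i^{2 T_i} ≤ 1/2 for every stage i = 1, …, n, and (1−β_1)/β_1 ≤ 12 (1−β_n)/√(β_n + β_n²). Then for every 1 ≤ k ≤ T_1 + … + T_n: (1/(1−β(k))) E[‖m^{k−1} − ∑_{i=1}^{k−1} b_{k−1,i} g^i‖²] ≤ 24 (β_1/√(β_n + β_n²)) σ². -/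
open MeasureTheory ProbabilityTheory

noncomputable section SGDMAux

variable {d : ℕ} {Z : Type*}

/-- Deterministic recursion: `sgdmXM G A B x1 K z = (x^{K+1}, m^K)` as a function of the
noise sequence `z`. -/
def sgdmXM (G : EuclideanSpace ℝ (Fin d) → Z → EuclideanSpace ℝ (Fin d))
    (A B : ℕ → ℝ) (x1 : EuclideanSpace ℝ (Fin d)) :
    ℕ → (ℕ → Z) → EuclideanSpace ℝ (Fin d) × EuclideanSpace ℝ (Fin d)
  | 0, _ => (x1, 0)
  | (K+1), z =>
      let p := sgdmXM G A B x1 K z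
      let m' := B (K+1) • p.2 + (1 - B (K+1)) • G p.1 (z (K+1))
      (p.1 - A (K+1) • m', m')

/-- The shifted momentum vector `m^K - ∑_{i=1}^K b_{K,i} ∇f(x^i)` as a function of noise. -/
def sgdmS (G : EuclideanSpace ℝ (Fin d) → Z → EuclideanSpace ℝ (Fin d))
    (A B : ℕ → ℝ) (x1 : EuclideanSpace ℝ (Fin d))
    (gradf : EuclideanSpace ℝ (Fin d) → EuclideanSpace ℝ (Fin d))
    (K : ℕ) (z : ℕ → Z) : EuclideanSpace ℝ (Fin d) :=
  (sgdmXM G A B x1 K z).2 - ∑ i ∈ Finset.Icc 1 K,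
    ((1 - B i) * ∏ j ∈ Finset.Icc (i + 1) K, B j) • gradf ((sgdmXM G A B x1 (i - 1) z).1)

variable {G : EuclideanSpace ℝ (Fin d) → Z → EuclideanSpace ℝ (Fin d)}
    {A B : ℕ → ℝ} {x1 : EuclideanSpace ℝ (Fin d)}
    {gradf : EuclideanSpace ℝ (Fin d) → EuclideanSpace ℝ (Fin d)}

lemma sgdmXM_congr {K : ℕ} {z z' : ℕ → Z} (h : ∀ i, 1 ≤ i → i ≤ K → z i = z' i) :
    sgdmXM G A B x1 K z = sgdmXM G A B x1 K z' := by
  induction K with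
  | zero => rfl
  | succ K ih =>
      have h1 : sgdmXM G A B x1 K z = sgdmXM G A B x1 K z' :=
        ih fun i hi1 hi2 => h i hi1 (by omega)
      simp only [sgdmXM, h1, h (K+1) (by omega) le_rfl]

lemma sgdmS_congr {K : ℕ} {z z' : ℕ → Z} (h : ∀ i, 1 ≤ i → i ≤ K → z i = z' i) :
    sgdmS G A B x1 gradf K z = sgdmS G A B x1 gradf K z' := by
  unfold sgdmS
  rw [sgdmXM_congr h]
  congr 1
  refine Finset.sum_congr rfl fun i hi => ?_
  rw [Finset.mem_Icc] at hi
  rw [sgdmXM_congr (fun j hj1 hj2 => h j hj1 (by omega))]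

lemma sgdmS_succ (K : ℕ) (z : ℕ → Z) :
    sgdmS G A B x1 gradf (K+1) z =
      B (K+1) • sgdmS G A B x1 gradf K z
      + (1 - B (K+1)) • (G (sgdmXM G A B x1 K z).1 (z (K+1))
          - gradf (sgdmXM G A B x1 K z).1) := by
  have hm : (sgdmXM G A B x1 (K+1) z).2
      = B (K+1) • (sgdmXM G A B x1 K z).2
        + (1 - B (K+1)) • G (sgdmXM G A B x1 K z).1 (z (K+1)) := rfl
  unfold sgdmS
  rw [hm, Finset.sum_Icc_succ_top (by omega : 1 ≤ K + 1)]
  have he : Finset.Icc (K+1+1) (K+1) = ∅ := Finset.Icc_eq_empty (by omega)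
  have hterm : ((1 - B (K+1)) * ∏ j ∈ Finset.Icc (K+1+1) (K+1), B j) •
      gradf ((sgdmXM G A B x1 (K+1-1) z).1)
      = (1 - B (K+1)) • gradf ((sgdmXM G A B x1 K z).1) := by
    rw [he]; simp
  have hsum : ∀ i ∈ Finset.Icc 1 K,
      ((1 - B i) * ∏ j ∈ Finset.Icc (i+1) (K+1), B j) •
        gradf ((sgdmXM G A B x1 (i-1) z).1)
      = B (K+1) • (((1 - B i) * ∏ j ∈ Finset.Icc (i+1) K, B j) •
        gradf ((sgdmXM G A B x1 (i-1) z).1)) := by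
    intro i hi
    rw [Finset.mem_Icc] at hi
    rw [Finset.prod_Icc_succ_top (by omega : i + 1 ≤ K + 1), smul_smul]
    ring_nf
  rw [Finset.sum_congr rfl hsum, ← Finset.smul_sum, hterm]
  rw [smul_sub, smul_sub]
  abel

lemma sgdmXM_measurable [MeasurableSpace Z] (hG : Measurable (Function.uncurry G)) (K : ℕ) :
    Measurable (fun z : ℕ → Z => sgdmXM G A B x1 K z) := by
  induction K with
  | zero => exact measurable_const
  | succ K ih =>
      have h1 : Measurable fun z : ℕ → Z => (sgdmXM G A B x1 K z).1 :=
        measurable_fst.comp ih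
      have h2 : Measurable fun z : ℕ → Z => (sgdmXM G A B x1 K z).2 :=
        measurable_snd.comp ih
      have hGv : Measurable fun z : ℕ → Z => G (sgdmXM G A B x1 K z).1 (z (K+1)) :=
        hG.comp (h1.prodMk (measurable_pi_apply (K+1)))
      have hm' : Measurable fun z : ℕ → Z =>
          B (K+1) • (sgdmXM G A B x1 K z).2 + (1 - B (K+1)) • G (sgdmXM G A B x1 K z).1 (z (K+1)) :=
        (h2.fun_const_smul _).add (hGv.fun_const_smul _)
      exact ((h1.sub (hm'.fun_const_smul _)).prodMk hm')

lemma sgdmS_measurable [MeasurableSpace Z] (hG : Measurable (Function.uncurry G))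
    (hgrad : Measurable gradf) (K : ℕ) :
    Measurable (fun z : ℕ → Z => sgdmS G A B x1 gradf K z) := by
  unfold sgdmS
  refine (measurable_snd.comp (sgdmXM_measurable hG K)).sub ?_
  refine Finset.measurable_sum _ fun i _ => ?_
  exact ((hgrad.comp (measurable_fst.comp (sgdmXM_measurable hG (i-1)))).fun_const_smul _)

end SGDMAux
set_option maxHeartbeats 2000000 in
/-- Variance bound for the shifted multistage SGDM momentum vector
`m^{k−1}`, normalized by the current momentum weight. -/
theorem multistage_sgdm_shifted_momentum_variance
    {d : ℕ} (hd : 1 ≤ d)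
    {Ω : Type*} [MeasureSpace Ω] (hprob : IsProbabilityMeasure (ℙ : Measure Ω))
    {Z : Type*} [mZ : MeasurableSpace Z]
    (f : EuclideanSpace ℝ (Fin d) → ℝ)
    (gradf : EuclideanSpace ℝ (Fin d) → EuclideanSpace ℝ (Fin d))
    (hgrad : ∀ x, HasGradientAt f (gradf x) x)
    (L : ℝ) (hL : 0 < L)
    (hsmooth : ∀ x y, ‖gradf x - gradf y‖ ≤ L * ‖x - y‖)
    (fstar : ℝ) (hfstar : IsGLB (Set.range f) fstar)
    (σ : ℝ) (hσ : 0 ≤ σ)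
    (ζ : ℕ → Ω → Z) (hζmeas : ∀ k, Measurable (ζ k))
    (hindep : iIndepFun (m := fun _ => mZ) ζ ℙ)
    (G : EuclideanSpace ℝ (Fin d) → Z → EuclideanSpace ℝ (Fin d))
    (hGmeas : Measurable (Function.uncurry G))
    (hunbiased : ∀ x k, ∫ ω, G x (ζ k ω) ∂ℙ = gradf x)
    (hvar : ∀ x k, ∫ ω, ‖G x (ζ k ω) - gradf x‖ ^ 2 ∂ℙ ≤ σ ^ 2)
    (n : ℕ) (hn : 1 ≤ n)
    (αs βs : ℕ → ℝ) (T : ℕ → ℕ)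
    (hαs : ∀ l ∈ Finset.Icc 1 n, 0 < αs l)
    (hβs : ∀ l ∈ Finset.Icc 1 n, βs l ∈ Set.Ico (0 : ℝ) 1)
    (A B : ℕ → ℝ)
    (hstage : ∀ l ∈ Finset.Icc 1 n, ∀ k : ℕ,
      (∑ j ∈ Finset.Icc 1 (l - 1), T j) < k → k ≤ (∑ j ∈ Finset.Icc 1 l, T j) →
      A k = αs l ∧ B k = βs l)
    (x m : ℕ → Ω → EuclideanSpace ℝ (Fin d))
    (x1 : EuclideanSpace ℝ (Fin d)) (hx1 : ∀ ω, x 1 ω = x1)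
    (hm0 : ∀ ω, m 0 ω = 0)
    (hm : ∀ k, 1 ≤ k → ∀ ω, m k ω = B k • m (k - 1) ω + (1 - B k) • G (x k ω) (ζ k ω))
    (hx : ∀ k, 1 ≤ k → ∀ ω, x (k + 1) ω = x k ω - A k • m k ω)
    (hmono : ∀ i j : ℕ, 1 ≤ i → i ≤ j → j ≤ n → βs i ≤ βs j)
    (hβhalf : (1 : ℝ) / 2 ≤ βs 1)
    (hThalf : ∀ i ∈ Finset.Icc 1 n, βs i ^ (2 * T i) ≤ (1 : ℝ) / 2)
    (hratio : (1 - βs 1) / βs 1 ≤ 12 * (1 - βs n) / Real.sqrt (βs n + βs n ^ 2)) :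
    ∀ k : ℕ, 1 ≤ k → k ≤ ∑ j ∈ Finset.Icc 1 n, T j →
      (1 / (1 - B k)) *
          ∫ ω, ‖m (k - 1) ω - ∑ i ∈ Finset.Icc 1 (k - 1),
            ((1 - B i) * ∏ j ∈ Finset.Icc (i + 1) (k - 1), B j) • gradf (x i ω)‖ ^ 2 ∂ℙ
        ≤ 24 * (βs 1 / Real.sqrt (βs n + βs n ^ 2)) * σ ^ 2 := by
  classical
  -- basic facts about βs
  have h1n : (1 : ℕ) ∈ Finset.Icc 1 n := Finset.mem_Icc.mpr ⟨le_rfl, hn⟩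
  have hβ1 : βs 1 ∈ Set.Ico (0:ℝ) 1 := hβs 1 h1n
  have hβn : βs n ∈ Set.Ico (0:ℝ) 1 := hβs n (Finset.mem_Icc.mpr ⟨hn, le_rfl⟩)
  have hβ1n : βs 1 ≤ βs n := hmono 1 n le_rfl hn le_rfl
  have hβnhalf : (1:ℝ)/2 ≤ βs n := le_trans hβhalf hβ1n
  have hqpos : 0 < Real.sqrt (βs n + βs n ^ 2) := by
    apply Real.sqrt_pos.mpr; nlinarith [hβnhalf]
  have hσ2 : (0:ℝ) ≤ σ ^ 2 := sq_nonneg σ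
  have hRHSnonneg : 0 ≤ 24 * (βs 1 / Real.sqrt (βs n + βs n ^ 2)) * σ ^ 2 := by
    have : 0 ≤ βs 1 := hβ1.1
    positivity
  -- nonemptiness
  have hneΩ : Nonempty Ω := by
    by_contra h
    rw [not_nonempty_iff] at h
    have h1 := hprob.measure_univ
    rw [Set.univ_eq_empty_iff.mpr h, measure_empty] at h1
    exact zero_ne_one h1
  let z0 : Z := ζ 0 (Classical.arbitrary Ω)
  -- the noise sequence
  set Zs : Ω → (ℕ → Z) := fun ω i => ζ i ω with hZsdef
  have hZsmeas : Measurable Zs := measurable_pi_lambda _ fun i => hζmeas i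
  -- gradf is continuous hence measurable
  have hgradm : Measurable gradf := by
    have : Continuous gradf := by
      apply continuous_iff_continuousAt.mpr
      intro x0
      apply Metric.continuousAt_iff.mpr
      intro ε hε
      refine ⟨ε / (L + 1), by positivity, fun {y} hy => ?_⟩
      have h1 : dist (gradf y) (gradf x0) ≤ L * dist y x0 := by
        rw [dist_eq_norm, dist_eq_norm]; exact hsmooth y x0
      have h2 : L * dist y x0 < L * (ε / (L+1)) + ε/(L+1) := by
        have := dist_nonneg (x := y) (y := x0)
        nlinarith
      calc dist (gradf y) (gradf x0) ≤ L * dist y x0 := h1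
        _ < L * (ε / (L+1)) + ε/(L+1) := h2
        _ = ε := by field_simp
    exact this.measurable
  -- S K ω
  set S : ℕ → Ω → EuclideanSpace ℝ (Fin d) :=
    fun K ω => sgdmS G A B x1 gradf K (Zs ω) with hSdef
  have hSmeas : ∀ K, Measurable (S K) :=
    fun K => (sgdmS_measurable hGmeas hgradm K).comp hZsmeas
  -- the deterministic recursion reproduces the random iterates
  have key : ∀ K ω, sgdmXM G A B x1 K (Zs ω) = (x (K+1) ω, m K ω) := by
    intro K ω
    induction K with
    | zero => simp [sgdmXM, hx1 ω, hm0 ω]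
    | succ K ih =>
        simp only [sgdmXM, ih]
        have hmK : m (K+1) ω = B (K+1) • m K ω + (1 - B (K+1)) • G (x (K+1) ω) (ζ (K+1) ω) := by
          have := hm (K+1) (by omega) ω
          simpa using this
        have hxK : x (K+2) ω = x (K+1) ω - A (K+1) • m (K+1) ω := hx (K+1) (by omega) ω
        simp only [hZsdef]
        rw [← hmK]
        exact Prod.ext (by rw [hxK]) rfl
  -- stage existence
  have hstageex : ∀ k : ℕ, 1 ≤ k → k ≤ ∑ j ∈ Finset.Icc 1 n, T j →
      ∃ l, 1 ≤ l ∧ l ≤ n ∧ B k = βs l := by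
    intro k hk1 hk2
    have haux : ∀ N : ℕ, N ≤ n → k ≤ ∑ j ∈ Finset.Icc 1 N, T j →
        ∃ l, 1 ≤ l ∧ l ≤ N ∧ (∑ j ∈ Finset.Icc 1 (l-1), T j) < k ∧
          k ≤ ∑ j ∈ Finset.Icc 1 l, T j := by
      intro N
      induction N with
      | zero => intro _ h; simp at h; omega
      | succ N ih =>
          intro hNn hkN
          by_cases hc : k ≤ ∑ j ∈ Finset.Icc 1 N, T j
          · obtain ⟨l, h1, h2, h3, h4⟩ := ih (by omega) hc
            exact ⟨l, h1, by omega, h3, h4⟩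
          · refine ⟨N+1, by omega, le_rfl, ?_, hkN⟩
            simpa using Nat.lt_of_not_le hc
    obtain ⟨l, h1, h2, h3, h4⟩ := haux n le_rfl hk2
    exact ⟨l, h1, h2, (hstage l (Finset.mem_Icc.mpr ⟨h1, h2⟩) k h3 h4).2⟩
  -- the one-step variance recursion
  have step : ∀ K : ℕ, 0 < B (K+1) → B (K+1) < 1 →
      Integrable (fun ω => ‖S (K+1) ω‖^2) ℙ →
      Integrable (fun ω => ‖S K ω‖^2) ℙ ∧
      ∫ ω, ‖S (K+1) ω‖^2 ∂ℙ
        ≤ (B (K+1))^2 * ∫ ω, ‖S K ω‖^2 ∂ℙ + (1 - B (K+1))^2 * σ^2 := by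
    intro K hB0 hB1 hInt
    set c : ℝ := 1 - B (K+1) with hcdef
    have hc0 : 0 < c := by rw [hcdef]; linarith
    set Sfin : Finset ℕ := Finset.Icc 1 K with hSfin
    have hK1notin : (K+1) ∉ Sfin := by simp [hSfin]
    set U : Ω → ({i // i ∈ Sfin} → Z) := fun ω i => ζ i.1 ω with hUdef
    set V : Ω → Z := ζ (K+1) with hVdef
    have hUmeas : Measurable U := measurable_pi_lambda _ fun i => hζmeas i.1
    have hVmeas : Measurable V := hζmeas (K+1)
    set J : (({i // i ∈ Sfin} → Z) × Z) → (ℕ → Z) := fun p i =>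
      if h : i ∈ Sfin then p.1 ⟨i, h⟩ else if i = K+1 then p.2 else z0 with hJdef
    have hJmeas : Measurable J := by
      apply measurable_pi_lambda
      intro i
      by_cases h : i ∈ Sfin
      · simp only [hJdef, dif_pos h]
        exact (measurable_pi_apply _).comp measurable_fst
      · simp only [hJdef, dif_neg h]
        by_cases h2 : i = K+1
        · simp only [if_pos h2]; exact measurable_snd
        · simp only [if_neg h2]; exact measurable_const
    have hJagree : ∀ ω i, 1 ≤ i → i ≤ K + 1 → J (U ω, V ω) i = Zs ω i := by
      intro ω i h1 h2
      by_cases h : i ∈ Sfin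
      · simp only [hJdef, dif_pos h]; rfl
      · have hi : i = K+1 := by
          simp only [hSfin, Finset.mem_Icc] at h; omega
        subst hi
        simp [hJdef, dif_neg h]; rfl
    have hJfst : ∀ (u : {i // i ∈ Sfin} → Z) (v : Z) i, 1 ≤ i → i ≤ K →
        J (u, v) i = J (u, z0) i := by
      intro u v i h1 h2
      have h : i ∈ Sfin := by simp only [hSfin, Finset.mem_Icc]; omega
      simp only [hJdef, dif_pos h]
    set a : ({i // i ∈ Sfin} → Z) → EuclideanSpace ℝ (Fin d) :=
      fun u => sgdmS G A B x1 gradf K (J (u, z0)) with hadef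
    set y : ({i // i ∈ Sfin} → Z) → EuclideanSpace ℝ (Fin d) :=
      fun u => (sgdmXM G A B x1 K (J (u, z0))).1 with hydef
    set Fb : (({i // i ∈ Sfin} → Z) × Z) → ℝ :=
      fun p => ‖B (K+1) • a p.1 + c • (G (y p.1) p.2 - gradf (y p.1))‖^2 with hFdef
    have hJu : Measurable fun u : ({i // i ∈ Sfin} → Z) => J (u, z0) :=
      hJmeas.comp (measurable_id.prodMk measurable_const)
    have hameas : Measurable a := (sgdmS_measurable hGmeas hgradm K).comp hJu
    have hymeas : Measurable y := (measurable_fst.comp (sgdmXM_measurable hGmeas K)).comp hJu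
    have hFmeas : Measurable Fb := by
      apply Measurable.pow_const
      apply Measurable.norm
      refine Measurable.add ((hameas.comp measurable_fst).fun_const_smul _) ?_
      refine Measurable.fun_const_smul (Measurable.sub ?_ ?_) _
      · exact hGmeas.comp ((hymeas.comp measurable_fst).prodMk measurable_snd)
      · exact hgradm.comp (hymeas.comp measurable_fst)
    have hSK1 : ∀ ω, S (K+1) ω = B (K+1) • a (U ω)
        + c • (G (y (U ω)) (V ω) - gradf (y (U ω))) := by
      intro ω
      have h1 : S (K+1) ω = sgdmS G A B x1 gradf (K+1) (J (U ω, V ω)) :=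
        sgdmS_congr fun i hi1 hi2 => (hJagree ω i hi1 hi2).symm
      rw [h1, sgdmS_succ]
      have h2 : sgdmS G A B x1 gradf K (J (U ω, V ω)) = a (U ω) :=
        sgdmS_congr fun i hi1 hi2 => hJfst (U ω) (V ω) i hi1 hi2
      have h3 : sgdmXM G A B x1 K (J (U ω, V ω)) = sgdmXM G A B x1 K (J (U ω, z0)) :=
        sgdmXM_congr fun i hi1 hi2 => hJfst (U ω) (V ω) i hi1 hi2
      have h4 : J (U ω, V ω) (K+1) = V ω := by
        simp [hJdef, hK1notin]
      rw [h2, h3, h4]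
    have hSK : ∀ ω, S K ω = a (U ω) := fun ω =>
      sgdmS_congr fun i hi1 hi2 => by
        rw [← hJagree ω i hi1 (by omega), hJfst (U ω) (V ω) i hi1 hi2]
    have hdisj : Disjoint Sfin ({K+1} : Finset ℕ) := by
      rw [Finset.disjoint_singleton_right]; exact hK1notin
    have hIndepUV : IndepFun U V ℙ := by
      have h0 := hindep.indepFun_finset Sfin {K+1} hdisj hζmeas
      exact h0.comp measurable_id
        (measurable_pi_apply (⟨K+1, Finset.mem_singleton_self _⟩ : {i // i ∈ ({K+1} : Finset ℕ)}))
    set μU := Measure.map U ℙ with hμU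
    set μV := Measure.map V ℙ with hμV
    haveI : IsProbabilityMeasure μU := Measure.isProbabilityMeasure_map hUmeas.aemeasurable
    haveI : IsProbabilityMeasure μV := Measure.isProbabilityMeasure_map hVmeas.aemeasurable
    have hmap : Measure.map (fun ω => (U ω, V ω)) ℙ = μU.prod μV :=
      (indepFun_iff_map_prod_eq_prod_map_map hUmeas.aemeasurable hVmeas.aemeasurable).mp hIndepUV
    have hpairmeas : Measurable fun ω => (U ω, V ω) := hUmeas.prodMk hVmeas
    have hcomp : (fun ω => Fb (U ω, V ω)) = fun ω => ‖S (K+1) ω‖^2 := by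
      funext ω; rw [hSK1 ω]
    have hIntF : Integrable Fb (μU.prod μV) := by
      rw [← hmap]
      refine (integrable_map_measure hFmeas.aestronglyMeasurable hpairmeas.aemeasurable).mpr ?_
      show Integrable (fun ω => Fb (U ω, V ω)) ℙ
      rw [hcomp]; exact hInt
    -- slice analysis
    have hslice : ∀ u : {i // i ∈ Sfin} → Z, Integrable (fun v => Fb (u, v)) μV →
        (‖B (K+1) • a u‖^2 ≤ ∫ v, Fb (u, v) ∂μV ∧
         ∫ v, Fb (u, v) ∂μV ≤ ‖B (K+1) • a u‖^2 + c^2 * σ^2) := by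
      intro u hIntu
      set w : EuclideanSpace ℝ (Fin d) := B (K+1) • a u with hwdef
      set ε : Z → EuclideanSpace ℝ (Fin d) := fun v => G (y u) v - gradf (y u) with hεdef
      have hεmeas : Measurable ε := by
        refine Measurable.sub ?_ measurable_const
        exact hGmeas.comp (measurable_const.prodMk measurable_id)
      have hFuv : ∀ v, Fb (u, v) = ‖w‖^2 + (2 * c) * (inner ℝ w (ε v) : ℝ) + c^2 * ‖ε v‖^2 := by
        intro v
        show ‖w + c • ε v‖^2 = _
        have hn : ‖c • ε v‖ = c * ‖ε v‖ := by
          rw [norm_smul, Real.norm_eq_abs, abs_of_pos hc0]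
        rw [norm_add_sq_real, real_inner_smul_right, hn]
        ring
      have hc2 : (0:ℝ) < c^2 := by positivity
      have hIntε2 : Integrable (fun v => ‖ε v‖^2) μV := by
        refine Integrable.mono' ((hIntu.add (integrable_const (‖w‖^2))).const_mul (2 / c^2))
          (hεmeas.norm.pow_const 2).aestronglyMeasurable ?_
        refine Filter.Eventually.of_forall fun v => ?_
        have h1 : c * ‖ε v‖ ≤ ‖w + c • ε v‖ + ‖w‖ := by
          calc c * ‖ε v‖ = ‖c • ε v‖ := by
                rw [norm_smul, Real.norm_eq_abs, abs_of_pos hc0]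
            _ = ‖(w + c • ε v) - w‖ := by congr 1; abel
            _ ≤ ‖w + c • ε v‖ + ‖w‖ := norm_sub_le _ _
        have h4 : (c * ‖ε v‖)^2 ≤ (‖w + c • ε v‖ + ‖w‖)^2 :=
          pow_le_pow_left₀ (by positivity) h1 2
        have h5 : c^2 * ‖ε v‖^2 ≤ 2 * (Fb (u, v) + ‖w‖^2) := by
          have h3 : Fb (u, v) = ‖w + c • ε v‖^2 := rfl
          rw [h3]
          nlinarith [sq_nonneg (‖w + c • ε v‖ - ‖w‖)]
        simp only [Pi.add_apply]
        rw [Real.norm_eq_abs, abs_of_nonneg (sq_nonneg _), div_mul_eq_mul_div,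
          le_div_iff₀ hc2]
        nlinarith [h5]
      have hIntε1 : Integrable ε μV := by
        refine Integrable.mono' ((integrable_const (1:ℝ)).add hIntε2)
          hεmeas.aestronglyMeasurable ?_
        refine Filter.Eventually.of_forall fun v => ?_
        simp only [Pi.add_apply]
        nlinarith [norm_nonneg (ε v), sq_nonneg (‖ε v‖ - 1)]
      have hGint : Integrable (fun v => G (y u) v) μV := by
        have hh : (fun v => G (y u) v) = fun v => ε v + gradf (y u) := by
          funext v; simp only [hεdef]; abel
        rw [hh]; exact hIntε1.add (integrable_const _)
      have hGmean : ∫ v, G (y u) v ∂μV = gradf (y u) := by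
        rw [hμV, hVdef, integral_map (hζmeas (K+1)).aemeasurable]
        · exact hunbiased (y u) (K+1)
        · exact (hGmeas.comp (measurable_const.prodMk measurable_id)).aestronglyMeasurable
      have hεint0 : ∫ v, ε v ∂μV = 0 := by
        show (∫ v, (G (y u) v - gradf (y u)) ∂μV) = 0
        rw [integral_sub hGint (integrable_const _), integral_const]
        simp [hGmean]
      have hIntInner : Integrable (fun v => (2*c) * (inner ℝ w (ε v) : ℝ)) μV :=
        (hIntε1.const_inner w).const_mul (2*c)
      have hInner0 : ∫ v, (2*c) * (inner ℝ w (ε v) : ℝ) ∂μV = 0 := by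
        rw [integral_const_mul, integral_inner hIntε1, hεint0]
        simp
      have hIeq : ∫ v, Fb (u, v) ∂μV = ‖w‖^2 + c^2 * ∫ v, ‖ε v‖^2 ∂μV := by
        have hh : (fun v => Fb (u, v))
            = fun v => (‖w‖^2 + (2*c) * (inner ℝ w (ε v) : ℝ)) + c^2 * ‖ε v‖^2 := by
          funext v; rw [hFuv v]
        have hInt1 : Integrable (fun v => ‖w‖^2 + (2*c) * (inner ℝ w (ε v) : ℝ)) μV :=
          (integrable_const _).add hIntInner
        have hInt2 : Integrable (fun v => c^2 * ‖ε v‖^2) μV := hIntε2.const_mul _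
        rw [hh, integral_add hInt1 hInt2, integral_add (integrable_const _) hIntInner,
          integral_const, hInner0, integral_const_mul]
        simp
      have hvaru : ∫ v, ‖ε v‖^2 ∂μV ≤ σ^2 := by
        have hh : ∫ v, ‖ε v‖^2 ∂μV = ∫ ω, ‖G (y u) (ζ (K+1) ω) - gradf (y u)‖^2 ∂ℙ := by
          rw [hμV, hVdef, integral_map (hζmeas (K+1)).aemeasurable
            (hεmeas.norm.pow_const 2).aestronglyMeasurable]
        rw [hh]; exact hvar (y u) (K+1)
      have hε2nonneg : 0 ≤ ∫ v, ‖ε v‖^2 ∂μV := integral_nonneg fun v => sq_nonneg _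
      constructor
      · rw [hIeq]; nlinarith
      · rw [hIeq]; nlinarith
    -- assemble
    have haeInt : ∀ᵐ u ∂μU, Integrable (fun v => Fb (u, v)) μV := hIntF.prod_right_ae
    have hIntSlices : Integrable (fun u => ∫ v, Fb (u, v) ∂μV) μU := hIntF.integral_prod_left
    have hIntBa : Integrable (fun u => ‖B (K+1) • a u‖^2) μU := by
      refine Integrable.mono' hIntSlices
        ((hameas.fun_const_smul _).norm.pow_const 2).aestronglyMeasurable ?_
      filter_upwards [haeInt] with u hu
      rw [Real.norm_eq_abs, abs_of_nonneg (sq_nonneg _)]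
      exact (hslice u hu).1
    have hsmulpow : (fun u => ‖B (K+1) • a u‖^2) = fun u => (B (K+1))^2 * ‖a u‖^2 := by
      funext u
      rw [norm_smul, Real.norm_eq_abs, abs_of_pos hB0, mul_pow]
    have hIntA : Integrable (fun u => ‖a u‖^2) μU := by
      have h2 : Integrable (fun u => (B (K+1))^2 * ‖a u‖^2) μU := by
        rw [← hsmulpow]; exact hIntBa
      have h3 := h2.const_mul (1/(B (K+1))^2)
      have h4 : (fun u => (1/(B (K+1))^2) * ((B (K+1))^2 * ‖a u‖^2))
          = fun u => ‖a u‖^2 := by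
        funext u; field_simp
      rwa [h4] at h3
    have hSKcomp : (fun ω => ‖S K ω‖^2) = fun ω => ‖a (U ω)‖^2 := by
      funext ω; rw [hSK ω]
    have hIntSK : Integrable (fun ω => ‖S K ω‖^2) ℙ := by
      rw [hSKcomp]
      exact (integrable_map_measure (hameas.norm.pow_const 2).aestronglyMeasurable
        hUmeas.aemeasurable).mp hIntA
    refine ⟨hIntSK, ?_⟩
    have hEq1 : ∫ ω, ‖S (K+1) ω‖^2 ∂ℙ = ∫ p, Fb p ∂(μU.prod μV) := by
      rw [← hcomp, ← hmap, integral_map hpairmeas.aemeasurable hFmeas.aestronglyMeasurable]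
    have hEq2 : ∫ p, Fb p ∂(μU.prod μV) = ∫ u, (∫ v, Fb (u, v) ∂μV) ∂μU :=
      integral_prod _ hIntF
    have hEq3 : ∫ ω, ‖S K ω‖^2 ∂ℙ = ∫ u, ‖a u‖^2 ∂μU := by
      rw [hSKcomp, hμU, integral_map hUmeas.aemeasurable
        (hameas.norm.pow_const 2).aestronglyMeasurable]
    have hle : ∫ u, (∫ v, Fb (u, v) ∂μV) ∂μU
        ≤ ∫ u, (‖B (K+1) • a u‖^2 + c^2 * σ^2) ∂μU := by
      refine integral_mono_ae hIntSlices (hIntBa.add (integrable_const _)) ?_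
      filter_upwards [haeInt] with u hu
      exact (hslice u hu).2
    rw [hEq1, hEq2, hEq3]
    calc ∫ u, (∫ v, Fb (u, v) ∂μV) ∂μU
        ≤ ∫ u, (‖B (K+1) • a u‖^2 + c^2 * σ^2) ∂μU := hle
      _ = (∫ u, ‖B (K+1) • a u‖^2 ∂μU) + c^2 * σ^2 := by
          rw [integral_add hIntBa (integrable_const _), integral_const]
          simp
      _ = (B (K+1))^2 * (∫ u, ‖a u‖^2 ∂μU) + c^2 * σ^2 := by
          rw [hsmulpow, integral_const_mul]
      _ = (B (K+1))^2 * (∫ u, ‖a u‖^2 ∂μU) + (1 - B (K+1))^2 * σ^2 := by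
          rw [hcdef]
  -- induction: the variance bound
  have main : ∀ K : ℕ, K ≤ ∑ j ∈ Finset.Icc 1 n, T j →
      Integrable (fun ω => ‖S K ω‖^2) ℙ →
      ∫ ω, ‖S K ω‖^2 ∂ℙ ≤ 2 * (1 - βs 1) * σ^2 := by
    intro K
    induction K with
    | zero =>
        intro _ _
        have h0 : ∀ ω, S 0 ω = 0 := by
          intro ω
          simp [hSdef, sgdmS, sgdmXM]
        have : (fun ω => ‖S 0 ω‖^2) = fun _ => (0:ℝ) := by
          funext ω; rw [h0 ω]; simp
        rw [this, integral_const]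
        simp
        nlinarith [hβ1.2, hσ2]
    | succ K ih =>
        intro hK hInt
        obtain ⟨l, hl1, hln, hBl⟩ := hstageex (K+1) (by omega) hK
        have hβl : βs l ∈ Set.Ico (0:ℝ) 1 := hβs l (Finset.mem_Icc.mpr ⟨hl1, hln⟩)
        have hβ1l : βs 1 ≤ βs l := hmono 1 l le_rfl hl1 hln
        have hB0 : 0 < B (K+1) := by rw [hBl]; linarith [hβhalf, hβ1l]
        have hB1 : B (K+1) < 1 := by rw [hBl]; exact hβl.2
        have hBhalf : (1:ℝ)/2 ≤ B (K+1) := by rw [hBl]; linarith [hβhalf, hβ1l]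
        have hBβ1 : βs 1 ≤ B (K+1) := by rw [hBl]; exact hβ1l
        obtain ⟨hIntK, hrec⟩ := step K hB0 hB1 hInt
        have hIH := ih (by omega) hIntK
        have hVnonneg : 0 ≤ ∫ ω, ‖S K ω‖^2 ∂ℙ :=
          integral_nonneg fun ω => sq_nonneg _
        have hkey : (1 - B (K+1))^2 ≤ 2*(1 - βs 1)*(1 - B (K+1)^2) := by
          nlinarith [mul_nonneg (mul_nonneg (show (0:ℝ) ≤ 1 - B (K+1) by linarith)
              (show (0:ℝ) ≤ 1 - βs 1 by linarith [hβ1.2]))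
              (show (0:ℝ) ≤ 1 + 2 * B (K+1) by linarith),
            mul_nonneg (show (0:ℝ) ≤ 1 - B (K+1) by linarith)
              (show (0:ℝ) ≤ B (K+1) - βs 1 by linarith)]
        nlinarith [hrec, mul_le_mul_of_nonneg_left hIH (sq_nonneg (B (K+1))),
          mul_le_mul_of_nonneg_right hkey hσ2]
  -- conclusion
  intro k hk1 hk2
  obtain ⟨l, hl1, hln, hBl⟩ := hstageex k hk1 hk2
  have hβl : βs l ∈ Set.Ico (0:ℝ) 1 := hβs l (Finset.mem_Icc.mpr ⟨hl1, hln⟩)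
  have hβln : βs l ≤ βs n := hmono l n hl1 hln le_rfl
  have hBk1 : 0 < 1 - B k := by rw [hBl]; linarith [hβl.2]
  have hBkn : 1 - βs n ≤ 1 - B k := by rw [hBl]; linarith
  have hβn1 : 0 < 1 - βs n := by linarith [hβn.2]
  -- identify the integrand with ‖S (k-1)‖²
  have hintegrand : (fun ω => ‖m (k - 1) ω - ∑ i ∈ Finset.Icc 1 (k - 1),
      ((1 - B i) * ∏ j ∈ Finset.Icc (i + 1) (k - 1), B j) • gradf (x i ω)‖ ^ 2)
      = fun ω => ‖S (k-1) ω‖^2 := by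
    funext ω
    congr 2
    have hm' : m (k-1) ω = (sgdmXM G A B x1 (k-1) (Zs ω)).2 := by rw [key]
    have hx' : ∀ i ∈ Finset.Icc 1 (k-1), gradf (x i ω) = gradf ((sgdmXM G A B x1 (i-1) (Zs ω)).1) := by
      intro i hi
      rw [Finset.mem_Icc] at hi
      rw [key (i-1) ω, show i - 1 + 1 = i from by omega]
    rw [hSdef]
    simp only [sgdmS]
    rw [hm']
    congr 1
    refine Finset.sum_congr rfl fun i hi => ?_
    rw [hx' i hi]
  rw [hintegrand]
  by_cases hGood : Integrable (fun ω => ‖S (k-1) ω‖^2) ℙ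
  · have hbound := main (k-1) (le_trans (Nat.sub_le k 1) hk2) hGood
    have hVnonneg : 0 ≤ ∫ ω, ‖S (k-1) ω‖^2 ∂ℙ := integral_nonneg fun ω => sq_nonneg _
    have h1 : (1 / (1 - B k)) * ∫ ω, ‖S (k-1) ω‖^2 ∂ℙ
        ≤ (1 / (1 - βs n)) * (2 * (1 - βs 1) * σ^2) := by
      have hh : (1:ℝ) / (1 - B k) ≤ 1 / (1 - βs n) := by
        apply one_div_le_one_div_of_le hβn1 hBkn
      calc (1 / (1 - B k)) * ∫ ω, ‖S (k-1) ω‖^2 ∂ℙ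
          ≤ (1 / (1 - βs n)) * ∫ ω, ‖S (k-1) ω‖^2 ∂ℙ :=
            mul_le_mul_of_nonneg_right hh hVnonneg
        _ ≤ (1 / (1 - βs n)) * (2 * (1 - βs 1) * σ^2) := by
            apply mul_le_mul_of_nonneg_left hbound
            positivity
    refine le_trans h1 ?_
    -- numeric: (1/(1-βn)) * 2(1-β1)σ² ≤ 24 (β1/√(βn+βn²)) σ²
    have hβ1pos : 0 < βs 1 := by linarith [hβhalf]
    rw [div_le_div_iff₀ hβ1pos hqpos] at hratio
    rw [one_div_mul_eq_div, div_le_iff₀ hβn1,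
      show 24 * (βs 1 / Real.sqrt (βs n + βs n ^ 2)) * σ ^ 2 * (1 - βs n)
        = 24 * βs 1 * σ ^ 2 * (1 - βs n) / Real.sqrt (βs n + βs n ^ 2) from by ring,
      le_div_iff₀ hqpos]
    nlinarith [mul_le_mul_of_nonneg_right hratio hσ2]
  · rw [integral_undef hGood, mul_zero]
    exact hRHSnonneg
end

section
/- Suppose 0 ≤ β_1 ≤ β_2 ≤ … ≤ β_n < 1. For 1 ≤ i ≤ k − 1 with k ≤ T_1 + … + T_n, define d_{k,i} = (L²/(1 − ∏_{j=1}^k β(j))) ∑_{j=1}^i (k − j) b_{k,j} and a_{k,i} = (L² β(k)^{k−i}/(1 − ∏_{j=1}^k β(j))) (k − i + β(k)/(1−β(k))). Then d_{k,i} ≤ a_{k,i} for all 1 ≤ i ≤ k − 1; equivalently, ∑_{j=1}^i (k − j) b_{k,j} ≤ β(k)^{k−i} (k − i + β(k)/(1−β(k))). -/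
/-- For the multistage momentum weights, the coefficients
`d_{k,i} = (L²/(1−∏_{j=1}^k β(j))) ∑_{j=1}^i (k−j) b_{k,j}` are dominated by
`a_{k,i} = (L² β(k)^{k−i}/(1−∏_{j=1}^k β(j))) (k−i+β(k)/(1−β(k)))`. -/
theorem multistage_weights_coefficient_bound
    (n : ℕ) (hn : 1 ≤ n)
    (βs : ℕ → ℝ) (T : ℕ → ℕ)
    (hβs : ∀ l ∈ Finset.Icc 1 n, βs l ∈ Set.Ico (0 : ℝ) 1)
    (hmono : ∀ i j : ℕ, 1 ≤ i → i ≤ j → j ≤ n → βs i ≤ βs j)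
    (B : ℕ → ℝ)
    (hstage : ∀ l ∈ Finset.Icc 1 n, ∀ k : ℕ,
      (∑ j ∈ Finset.Icc 1 (l - 1), T j) < k → k ≤ (∑ j ∈ Finset.Icc 1 l, T j) →
      B k = βs l)
    (L : ℝ) (hL : 0 < L) :
    ∀ k : ℕ, 1 ≤ k → k ≤ ∑ j ∈ Finset.Icc 1 n, T j →
      ∀ i : ℕ, 1 ≤ i → i ≤ k - 1 →
        (L ^ 2 / (1 - ∏ j ∈ Finset.Icc 1 k, B j)) *
            ∑ j ∈ Finset.Icc 1 i,
              ((k - j : ℕ) : ℝ) * ((1 - B j) * ∏ l ∈ Finset.Icc (j + 1) k, B l)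
          ≤ (L ^ 2 * (B k) ^ (k - i) / (1 - ∏ j ∈ Finset.Icc 1 k, B j)) *
              (((k - i : ℕ) : ℝ) + B k / (1 - B k)) := by
  classical
  intro k hk1 hk2 i hi1 hi2
  have hk2' : 2 ≤ k := by omega
  -- every index 1 ≤ j ≤ ∑ T lies in a stage
  have hstageEx : ∀ j : ℕ, 1 ≤ j → j ≤ ∑ t ∈ Finset.Icc 1 n, T t →
      ∃ l, 1 ≤ l ∧ l ≤ n ∧ (∑ t ∈ Finset.Icc 1 (l - 1), T t) < j ∧
        j ≤ ∑ t ∈ Finset.Icc 1 l, T t := by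
    intro j hj1 hj2
    have hex : ∃ l, j ≤ ∑ t ∈ Finset.Icc 1 l, T t := ⟨n, hj2⟩
    have hl : j ≤ ∑ t ∈ Finset.Icc 1 (Nat.find hex), T t := Nat.find_spec hex
    have hln : Nat.find hex ≤ n := Nat.find_min' hex hj2
    have hl1 : 1 ≤ Nat.find hex := by
      by_contra h
      have h0 : Nat.find hex = 0 := by omega
      rw [h0] at hl
      simp at hl
      omega
    have hlt : (∑ t ∈ Finset.Icc 1 (Nat.find hex - 1), T t) < j := by
      have := Nat.find_min hex (show Nat.find hex - 1 < Nat.find hex by omega)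
      omega
    exact ⟨Nat.find hex, hl1, hln, hlt, hl⟩
  -- basic properties of B on [1, k]
  have hBprop : ∀ j, 1 ≤ j → j ≤ k → 0 ≤ B j ∧ B j < 1 ∧ B j ≤ B k := by
    intro j hj1 hjk
    obtain ⟨l, hl1, hln, hlt, hle⟩ := hstageEx j hj1 (le_trans hjk hk2)
    obtain ⟨m, hm1, hmn, hmt, hme⟩ := hstageEx k hk1 hk2
    have hBj : B j = βs l := hstage l (Finset.mem_Icc.mpr ⟨hl1, hln⟩) j hlt hle
    have hBk : B k = βs m := hstage m (Finset.mem_Icc.mpr ⟨hm1, hmn⟩) k hmt hme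
    have hβl := hβs l (Finset.mem_Icc.mpr ⟨hl1, hln⟩)
    have hlm : l ≤ m := by
      by_contra h
      push_neg at h
      have hsub : Finset.Icc 1 m ⊆ Finset.Icc 1 (l - 1) := by
        intro x hx
        simp only [Finset.mem_Icc] at hx ⊢
        omega
      have : (∑ t ∈ Finset.Icc 1 m, T t) ≤ ∑ t ∈ Finset.Icc 1 (l - 1), T t :=
        Finset.sum_le_sum_of_subset hsub
      omega
    refine ⟨?_, ?_, ?_⟩
    · rw [hBj]; exact hβl.1
    · rw [hBj]; exact hβl.2
    · rw [hBj, hBk]; exact hmono l m hl1 hlm hmn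
  set β := B k with hβdef
  have hβ0 : 0 ≤ β := (hBprop k hk1 le_rfl).1
  have hβ1 : β < 1 := (hBprop k hk1 le_rfl).2.1
  set P : ℕ → ℝ := fun a => ∏ l ∈ Finset.Icc a k, B l with hPdef
  have hPnonneg : ∀ a, 1 ≤ a → 0 ≤ P a := by
    intro a ha
    apply Finset.prod_nonneg
    intro l hl
    simp only [Finset.mem_Icc] at hl
    exact (hBprop l (by omega) hl.2).1
  have hPle : ∀ a, 1 ≤ a → P a ≤ β ^ (k + 1 - a) := by
    intro a ha
    by_cases hak : a ≤ k
    · have hle : P a ≤ ∏ l ∈ Finset.Icc a k, β := by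
        apply Finset.prod_le_prod
        · intro l hl
          simp only [Finset.mem_Icc] at hl
          exact (hBprop l (by omega) hl.2).1
        · intro l hl
          simp only [Finset.mem_Icc] at hl
          exact (hBprop l (by omega) hl.2).2.2
      calc P a ≤ ∏ l ∈ Finset.Icc a k, β := hle
        _ = β ^ (k + 1 - a) := by rw [Finset.prod_const, Nat.card_Icc]
    · have : Finset.Icc a k = ∅ := Finset.Icc_eq_empty (by omega)
      have h0 : k + 1 - a = 0 := by omega
      simp [hPdef, this, h0]
  have hPrec : ∀ j, 1 ≤ j → j ≤ k → P j = B j * P (j + 1) := by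
    intro j hj1 hjk
    have hins : Finset.Icc j k = insert j (Finset.Icc (j + 1) k) := by
      ext x
      simp only [Finset.mem_Icc, Finset.mem_insert]
      omega
    rw [hPdef]
    simp only
    rw [hins, Finset.prod_insert (by simp)]
  -- the denominator is positive
  have hP1lt : P 1 < 1 := by
    have h1 : P 1 ≤ β ^ (k + 1 - 1) := hPle 1 le_rfl
    have h2 : β ^ (k + 1 - 1) < 1 := pow_lt_one₀ hβ0 hβ1 (by omega)
    linarith
  have hden : 0 < 1 - P 1 := by linarith
  -- Abel summation identity
  have key : ∀ i', 1 ≤ i' → i' ≤ k - 1 →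
      (∑ j ∈ Finset.Icc 1 i', ((k - j : ℕ) : ℝ) * (P (j + 1) - P j))
        + ((k - 1 : ℕ) : ℝ) * P 1
      = ((k - i' : ℕ) : ℝ) * P (i' + 1) + ∑ j ∈ Finset.Icc 2 i', P j := by
    intro i' hi'
    induction i', hi' using Nat.le_induction with
    | base =>
      intro _
      rw [Finset.Icc_self, Finset.sum_singleton]
      rw [show Finset.Icc 2 1 = ∅ from Finset.Icc_eq_empty (by omega)]
      simp
      ring
    | succ m hm ih =>
      intro hmk
      have ihm := ih (by omega)
      rw [Finset.sum_Icc_succ_top (by omega : 1 ≤ m + 1),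
        Finset.sum_Icc_succ_top (by omega : 2 ≤ m + 1)]
      have hc1 : ((k - (m + 1) : ℕ) : ℝ) = ((k - m : ℕ) : ℝ) - 1 := by
        have h1 : ((k - (m + 1) : ℕ) : ℝ) = (k : ℝ) - (m + 1) := by
          rw [Nat.cast_sub (by omega)]; push_cast; ring
        have h2 : ((k - m : ℕ) : ℝ) = (k : ℝ) - m := by
          rw [Nat.cast_sub (by omega)]
        rw [h1, h2]; ring
      rw [hc1]
      linarith [ihm]
  -- geometric sum bound
  have geo : ∀ i', 1 ≤ i' → i' ≤ k →
      (∑ j ∈ Finset.Icc 2 i', β ^ (k + 1 - j)) ≤ β ^ (k + 1 - i') / (1 - β) := by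
    intro i' hi'
    induction i', hi' using Nat.le_induction with
    | base =>
      intro _
      rw [show Finset.Icc 2 1 = ∅ from Finset.Icc_eq_empty (by omega)]
      rw [Finset.sum_empty]
      exact div_nonneg (pow_nonneg hβ0 _) (by linarith)
    | succ m hm ih =>
      intro hmk
      have ihm := ih (by omega)
      rw [Finset.sum_Icc_succ_top (by omega : 2 ≤ m + 1)]
      have he1 : k + 1 - (m + 1) = k - m := by omega
      have he2 : k + 1 - m = (k - m) + 1 := by omega
      rw [he1]
      rw [he2] at ihm
      have hpow : (0:ℝ) ≤ β ^ (k - m) := pow_nonneg hβ0 _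
      have heq : β ^ ((k - m) + 1) / (1 - β) + β ^ (k - m) = β ^ (k - m) / (1 - β) := by
        have h1β : (1:ℝ) - β ≠ 0 := by linarith
        rw [pow_succ]
        field_simp
        ring
      linarith
  -- rewrite the summand via telescoping
  have hsum_eq : (∑ j ∈ Finset.Icc 1 i,
      ((k - j : ℕ) : ℝ) * ((1 - B j) * ∏ l ∈ Finset.Icc (j + 1) k, B l))
      = ∑ j ∈ Finset.Icc 1 i, ((k - j : ℕ) : ℝ) * (P (j + 1) - P j) := by
    apply Finset.sum_congr rfl
    intro j hj
    simp only [Finset.mem_Icc] at hj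
    have hrec := hPrec j hj.1 (by omega)
    have : (1 - B j) * ∏ l ∈ Finset.Icc (j + 1) k, B l = P (j + 1) - P j := by
      rw [hrec]
      show (1 - B j) * P (j + 1) = P (j + 1) - B j * P (j + 1)
      ring
    rw [this]
  -- main bound on the sum
  have hmain : (∑ j ∈ Finset.Icc 1 i,
      ((k - j : ℕ) : ℝ) * ((1 - B j) * ∏ l ∈ Finset.Icc (j + 1) k, B l))
      ≤ β ^ (k - i) * (((k - i : ℕ) : ℝ) + β / (1 - β)) := by
    rw [hsum_eq]
    have hid := key i hi1 hi2
    have hP1 : 0 ≤ ((k - 1 : ℕ) : ℝ) * P 1 := by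
      apply mul_nonneg (by positivity) (hPnonneg 1 le_rfl)
    have hPi : P (i + 1) ≤ β ^ (k - i) := by
      have := hPle (i + 1) (by omega)
      rwa [show k + 1 - (i + 1) = k - i by omega] at this
    have hsumP : (∑ j ∈ Finset.Icc 2 i, P j) ≤ ∑ j ∈ Finset.Icc 2 i, β ^ (k + 1 - j) := by
      apply Finset.sum_le_sum
      intro j hj
      simp only [Finset.mem_Icc] at hj
      exact hPle j (by omega)
    have hgeo := geo i hi1 (by omega)
    have hki : (0:ℝ) ≤ ((k - i : ℕ) : ℝ) := by positivity
    have h1 : (∑ j ∈ Finset.Icc 1 i, ((k - j : ℕ) : ℝ) * (P (j + 1) - P j))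
        ≤ ((k - i : ℕ) : ℝ) * β ^ (k - i) + β ^ (k + 1 - i) / (1 - β) := by
      have := mul_le_mul_of_nonneg_left hPi hki
      linarith
    have h2 : β ^ (k + 1 - i) / (1 - β) = β ^ (k - i) * (β / (1 - β)) := by
      rw [show k + 1 - i = (k - i) + 1 by omega, pow_succ]
      ring
    rw [h2] at h1
    linarith [h1]
  -- finish
  have hc : 0 ≤ L ^ 2 / (1 - P 1) := div_nonneg (by positivity) (le_of_lt hden)
  have hrhs : (L ^ 2 * β ^ (k - i) / (1 - P 1)) * (((k - i : ℕ) : ℝ) + β / (1 - β))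
      = (L ^ 2 / (1 - P 1)) * (β ^ (k - i) * (((k - i : ℕ) : ℝ) + β / (1 - β))) := by
    ring
  show (L ^ 2 / (1 - P 1)) * _ ≤ (L ^ 2 * β ^ (k - i) / (1 - P 1)) * _
  rw [hrhs]
  exact mul_le_mul_of_nonneg_left hmain hc
end
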